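/- For every m×n matrix M over ZMod 2 there exists an invertible upper-triangular n×n matrix V over ZMod 2 such that the product M * V is reduced, i.e. no two distinct nonzero columns of M * V have the same lowest nonzero row index. -/

import Mathlib

/-- `i` is the lowest nonzero row index of column `j` of `R`. -/
def IsLow {m n : ℕ} (R : Matrix (Fin m) (Fin n) (ZMod 2)) (j : Fin n) (i : Fin m) : Prop :=
  R i j ≠ 0 ∧ ∀ i' : Fin m, R i' j ≠ 0 → i' ≤ i

/-- No two distinct nonzero columns of `R` have the same lowest nonzero row index. -/
def Reduced {m n : ℕ} (R : Matrix (Fin m) (Fin n) (ZMod 2)) : Prop :=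
  ∀ j k : Fin n, j ≠ k → ∀ i i' : Fin m, IsLow R j i → IsLow R k i' → i ≠ i'

/-- `W` is upper-triangular: `W i j = 0` whenever `i > j`. -/
def UpperTri {n : ℕ} (W : Matrix (Fin n) (Fin n) (ZMod 2)) : Prop :=
  ∀ i j : Fin n, j < i → W i j = 0

namespace RedAux

open Matrix Finset

variable {m n : ℕ}

/-- measure of a column -/
noncomputable def colM (R : Matrix (Fin m) (Fin n) (ZMod 2)) (j : Fin n) : ℕ :=
  if h : (Finset.univ.filter (fun i => R i j ≠ 0)).Nonempty
  then ((Finset.univ.filter (fun i => R i j ≠ 0)).max' h).val + 1 else 0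

noncomputable def mu (R : Matrix (Fin m) (Fin n) (ZMod 2)) : ℕ := ∑ j, colM R j

lemma colM_eq_of_isLow {R : Matrix (Fin m) (Fin n) (ZMod 2)} {j : Fin n} {i : Fin m}
    (h : IsLow R j i) : colM R j = i.val + 1 := by
  have hne : (Finset.univ.filter (fun i' => R i' j ≠ 0)).Nonempty :=
    ⟨i, by simp [h.1]⟩
  rw [colM, dif_pos hne]
  congr 1
  have h1 : i ≤ (Finset.univ.filter (fun i' => R i' j ≠ 0)).max' hne :=
    Finset.le_max' _ i (by simp [h.1])
  have h2 : (Finset.univ.filter (fun i' => R i' j ≠ 0)).max' hne ≤ i := by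
    apply h.2
    have := Finset.max'_mem _ hne
    simpa using this
  exact congrArg Fin.val (le_antisymm h2 h1)

lemma colM_le_of_lt {R : Matrix (Fin m) (Fin n) (ZMod 2)} {j : Fin n} {i : Fin m}
    (h : ∀ a : Fin m, R a j ≠ 0 → a < i) : colM R j ≤ i.val := by
  rw [colM]
  split_ifs with hne
  · have hmem := Finset.max'_mem _ hne
    have : R ((Finset.univ.filter (fun i' => R i' j ≠ 0)).max' hne) j ≠ 0 := by
      simpa using hmem
    exact (h _ this)
  · exact Nat.zero_le _

lemma colM_congr {R S : Matrix (Fin m) (Fin n) (ZMod 2)} {j : Fin n}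
    (h : ∀ a, R a j = S a j) : colM R j = colM S j := by
  unfold colM
  have : (fun i => R i j ≠ 0) = (fun i => S i j ≠ 0) := by
    funext a; rw [h a]
  simp_rw [this]

lemma zmod2_ne_zero {x : ZMod 2} (h : x ≠ 0) : x = 1 := by
  revert h; revert x; decide

lemma mul_elem_apply (M : Matrix (Fin m) (Fin n) (ZMod 2)) {k j : Fin n} (hkj : k ≠ j)
    (a : Fin m) (l : Fin n) :
    (M * ((1 : Matrix (Fin n) (Fin n) (ZMod 2)) + Matrix.single k j (1 : ZMod 2))) a l
      = if l = j then M a j + M a k else M a l := by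
  rw [Matrix.mul_add, Matrix.mul_one, Matrix.add_apply]
  have : (M * Matrix.single k j (1 : ZMod 2)) a l
      = if l = j then M a k else 0 := by
    rw [Matrix.mul_apply]
    simp only [Matrix.single, Matrix.of_apply]
    split_ifs with hl
    · subst hl
      rw [Finset.sum_eq_single k]
      · simp
      · intro b _ hb
        simp [Ne.symm hb]
      · simp
    · apply Finset.sum_eq_zero
      intro b _
      simp [Ne.symm hl]
  rw [this]
  split_ifs with hl
  · subst hl; ring
  · ring

lemma upperTri_one : UpperTri (1 : Matrix (Fin n) (Fin n) (ZMod 2)) := by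
  intro i j hij
  exact Matrix.one_apply_ne (Ne.symm hij.ne)

lemma upperTri_elem {k j : Fin n} (hkj : k < j) :
    UpperTri ((1 : Matrix (Fin n) (Fin n) (ZMod 2)) + Matrix.single k j (1 : ZMod 2)) := by
  intro a b hba
  rw [Matrix.add_apply]
  rw [Matrix.one_apply_ne (Ne.symm hba.ne)]
  have : Matrix.single k j (1 : ZMod 2) a b = 0 := by
    apply Matrix.single_apply_of_ne
    intro ⟨h1, h2⟩
    subst h1; subst h2
    exact absurd hkj (not_lt.mpr hba.le)
  rw [this, add_zero]

lemma upperTri_mul {A B : Matrix (Fin n) (Fin n) (ZMod 2)}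
    (hA : UpperTri A) (hB : UpperTri B) : UpperTri (A * B) := by
  intro i j hij
  rw [Matrix.mul_apply]
  apply Finset.sum_eq_zero
  intro x _
  rcases lt_or_ge x i with hx | hx
  · rw [hA i x hx, zero_mul]
  · rw [hB x j (lt_of_lt_of_le hij hx), mul_zero]

lemma isUnit_elem {k j : Fin n} (hkj : k ≠ j) :
    IsUnit ((1 : Matrix (Fin n) (Fin n) (ZMod 2)) + Matrix.single k j (1 : ZMod 2)) := by
  suffices hEE : ((1 : Matrix (Fin n) (Fin n) (ZMod 2)) + Matrix.single k j (1 : ZMod 2)) * ((1 : Matrix (Fin n) (Fin n) (ZMod 2)) + Matrix.single k j 1) = 1 by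
    exact ⟨⟨_, _, hEE, hEE⟩, rfl⟩
  have hsq : Matrix.single k j (1 : ZMod 2) * Matrix.single k j 1 = 0 :=
    Matrix.single_mul_single_of_ne (c := 1) k j k (Ne.symm hkj) 1
  have h2 : Matrix.single k j (1 : ZMod 2) + Matrix.single k j 1 = 0 := by
    ext a b
    simp only [Matrix.add_apply, Matrix.zero_apply]
    exact CharTwo.add_self_eq_zero _
  calc ((1 : Matrix (Fin n) (Fin n) (ZMod 2)) + Matrix.single k j (1 : ZMod 2)) * ((1 : Matrix (Fin n) (Fin n) (ZMod 2)) + Matrix.single k j 1)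
      = 1 + (Matrix.single k j 1 + Matrix.single k j 1)
          + Matrix.single k j 1 * Matrix.single k j 1 := by
        rw [mul_add, add_mul, add_mul, mul_one, one_mul]; noncomm_ring
    _ = 1 := by rw [hsq, h2]; abel

lemma step' (M : Matrix (Fin m) (Fin n) (ZMod 2)) {k j : Fin n} (hkj : k < j) {i : Fin m}
    (hj : IsLow M j i) (hk : IsLow M k i) :
    mu (M * ((1 : Matrix (Fin n) (Fin n) (ZMod 2)) + Matrix.single k j (1 : ZMod 2))) < mu M := by
  set R := M * ((1 : Matrix (Fin n) (Fin n) (ZMod 2)) + Matrix.single k j (1 : ZMod 2)) with hR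
  have happ : ∀ a l, R a l = if l = j then M a j + M a k else M a l :=
    fun a l => mul_elem_apply M hkj.ne a l
  have hcolj : colM R j ≤ i.val := by
    apply colM_le_of_lt
    intro a ha
    rw [happ a j, if_pos rfl] at ha
    rcases lt_trichotomy a i with h | h | h
    · exact h
    · exfalso; subst h
      rw [zmod2_ne_zero hj.1, zmod2_ne_zero hk.1] at ha
      exact ha (by decide)
    · exfalso
      have h1 : M a j = 0 := by
        by_contra hc; exact absurd (hj.2 a hc) (not_le.mpr h)
      have h2 : M a k = 0 := by
        by_contra hc; exact absurd (hk.2 a hc) (not_le.mpr h)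
      rw [h1, h2, add_zero] at ha
      exact ha rfl
  have hcoljM : colM M j = i.val + 1 := colM_eq_of_isLow hj
  apply Finset.sum_lt_sum
  · intro l _
    by_cases hl : l = j
    · subst hl; omega
    · have : ∀ a, R a l = M a l := fun a => by rw [happ a l, if_neg hl]
      exact le_of_eq (colM_congr this)
  · exact ⟨j, Finset.mem_univ j, by omega⟩

lemma aux : ∀ (N : ℕ) (M : Matrix (Fin m) (Fin n) (ZMod 2)), mu M ≤ N →
    ∃ W : Matrix (Fin n) (Fin n) (ZMod 2), IsUnit W ∧ UpperTri W ∧ Reduced (M * W) := by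
  intro N
  induction N with
  | zero =>
    intro M hM
    by_cases hred : Reduced M
    · exact ⟨1, isUnit_one, upperTri_one, by rwa [Matrix.mul_one]⟩
    · exfalso
      unfold Reduced at hred
      push_neg at hred
      obtain ⟨j, k, hjk, i, i', hji, hki', hii'⟩ := hred
      have := colM_eq_of_isLow hji
      have hle : colM M j ≤ mu M := Finset.single_le_sum (f := colM M)
        (fun l _ => Nat.zero_le _) (Finset.mem_univ j)
      omega
  | succ N ih =>
    intro M hM
    by_cases hred : Reduced M
    · exact ⟨1, isUnit_one, upperTri_one, by rwa [Matrix.mul_one]⟩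
    · unfold Reduced at hred
      push_neg at hred
      obtain ⟨j, k, hjk, i, i', hji, hki', hii'⟩ := hred
      subst hii'
      rcases hjk.lt_or_gt with hlt | hlt
      · -- j < k : add column j to column k
        set E := (1 : Matrix (Fin n) (Fin n) (ZMod 2)) + Matrix.single j k (1 : ZMod 2) with hE
        have hdec : mu (M * E) < mu M := step' M hlt hki' hji
        obtain ⟨W', hW'u, hW't, hW'r⟩ := ih (M * E) (by omega)
        refine ⟨E * W', (isUnit_elem hlt.ne).mul hW'u,
          upperTri_mul (upperTri_elem hlt) hW't, ?_⟩
        rwa [← Matrix.mul_assoc]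
      · -- k < j : add column k to column j
        set E := (1 : Matrix (Fin n) (Fin n) (ZMod 2)) + Matrix.single k j (1 : ZMod 2) with hE
        have hdec : mu (M * E) < mu M := step' M hlt hji hki'
        obtain ⟨W', hW'u, hW't, hW'r⟩ := ih (M * E) (by omega)
        refine ⟨E * W', (isUnit_elem hlt.ne).mul hW'u,
          upperTri_mul (upperTri_elem hlt) hW't, ?_⟩
        rwa [← Matrix.mul_assoc]

end RedAux

theorem exists_reduction {m n : ℕ} (M : Matrix (Fin m) (Fin n) (ZMod 2)) :
    ∃ W : Matrix (Fin n) (Fin n) (ZMod 2), IsUnit W ∧ UpperTri W ∧ Reduced (M * W) := by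
  exact RedAux.aux (RedAux.mu M) M le_rfl
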